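/- Let α ∈ 𝕋^d be rationally independent and F(θ,z) = (θ+α, f_θ(z)) a fibered holomorphic dynamics on 𝕋^d × D_R with f_θ(0) = 0, ρ₁(θ) = ∂_z f_θ(0), and |ρ₁(θ)| < c₀ < 1 for all θ. Define gⁿ_θ(z) = (∏_{i=0}^{n−1} ρ₁(θ+iα))⁻¹ f_θⁿ(z). Then the sequence gⁿ converges uniformly on 𝕋^d × D_r for some r > 0 to a continuous function g, holomorphic in each fiber, satisfying g_θ(0) = 0 and ∂_z g_θ(0) = 1, and moreover g_{θ+α}(f_θ(z)) = ρ₁(θ) g_θ(z); hence F is conjugate near the zero section to the linear dynamics Λ(θ,z) = (θ+α, ρ₁(θ)z). -/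

import Mathlib

open Metric Set Filter Topology

instance : Fact ((0:ℝ) < 1) := ⟨one_pos⟩

/-- The `d`-dimensional torus `𝕋^d = ℝ^d/ℤ^d`. -/
abbrev Torus (d : ℕ) := Fin d → AddCircle (1:ℝ)

/-- `α` is rationally independent iff the rotation `θ ↦ θ + α` is minimal. -/
def RatIndep {d : ℕ} (α : Torus d) : Prop :=
  ∀ θ : Torus d, Dense (Set.range fun n : ℕ => θ + n • α)

/-- The fibered `n`-th iterate `f_θⁿ(z) = f_{θ+(n-1)α}(⋯ f_θ(z) ⋯)`. -/
noncomputable def fiter {d : ℕ} (α : Torus d) (f : Torus d → ℂ → ℂ) :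
    ℕ → Torus d → ℂ → ℂ
  | 0 => fun _ z => z
  | n + 1 => fun θ z => f (θ + n • α) (fiter α f n θ z)

namespace KoenigsAux

/-- Geometric partial sums are bounded. -/
lemma geom_sum_le_one_div {c : ℝ} (h0 : 0 ≤ c) (h1 : c < 1) (n : ℕ) :
    ∑ k ∈ Finset.range n, c ^ k ≤ 1 / (1 - c) := by
  have hne : c ≠ 1 := ne_of_lt h1
  have hpos : (0:ℝ) < 1 - c := by linarith
  rw [geom_sum_eq hne]
  have h2 : (c ^ n - 1) / (c - 1) = (1 - c ^ n) / (1 - c) := by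
    rw [div_eq_div_iff (sub_ne_zero.mpr hne) (ne_of_gt hpos)]
    ring
  rw [h2]
  have hn : 1 - c ^ n ≤ 1 := by nlinarith [pow_nonneg h0 n]
  gcongr

/-- Quadratic (Schwarz-type) bound for a holomorphic function vanishing at `0`,
in terms of its linearization at `0`. -/
lemma quad_bound {R B : ℝ} (hR : 0 < R) {F : ℂ → ℂ}
    (hd : DifferentiableOn ℂ F (ball 0 R)) (h0 : F 0 = 0)
    (hB : ∀ z ∈ ball (0:ℂ) R, ‖F z - deriv F 0 * z‖ < B) :
    ∀ z ∈ ball (0:ℂ) R, ‖F z - deriv F 0 * z‖ ≤ (B / R + 1) / R * ‖z‖ ^ 2 := by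
  have hball : ball (0:ℂ) R ∈ 𝓝 (0:ℂ) := isOpen_ball.mem_nhds (mem_ball_self hR)
  have hFd : DifferentiableAt ℂ F 0 := hd.differentiableAt hball
  set h : ℂ → ℂ := fun z => F z - deriv F 0 * z with hhdef
  have hdh : DifferentiableOn ℂ h (ball 0 R) :=
    hd.sub ((differentiable_id.const_mul (deriv F 0)).differentiableOn)
  have h0' : h 0 = 0 := by show F 0 - deriv F 0 * 0 = 0; rw [h0]; ring
  have hderh : deriv h 0 = 0 := by
    have h1 : deriv h 0 = deriv F 0 - deriv (fun z : ℂ => deriv F 0 * z) 0 := by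
      rw [hhdef]
      exact deriv_sub hFd ((differentiable_id.const_mul (deriv F 0)).differentiableAt)
    have h2 : deriv (fun z : ℂ => deriv F 0 * z) 0 = deriv F 0 := by
      have := ((hasDerivAt_id (0:ℂ)).const_mul (deriv F 0)).deriv
      simpa using this
    rw [h1, h2, sub_self]
  set d1 : ℂ → ℂ := dslope h 0 with hd1def
  have hd1diff : DifferentiableOn ℂ d1 (ball 0 R) :=
    (Complex.differentiableOn_dslope hball).mpr hdh
  have hd10 : d1 0 = 0 := by rw [hd1def, dslope_same]; exact hderh
  have hd1bd : ∀ z ∈ ball (0:ℂ) R, ‖d1 z‖ ≤ B / R := by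
    intro z hz
    refine Complex.norm_dslope_le_div_of_mapsTo_ball hdh ?_ hz
    intro w hw
    rw [mem_closedBall, dist_eq_norm, h0', sub_zero]
    exact (hB w hw).le
  have hd2bd : ∀ z ∈ ball (0:ℂ) R, ‖dslope d1 0 z‖ ≤ (B / R + 1) / R := by
    intro z hz
    refine Complex.norm_dslope_le_div_of_mapsTo_ball hd1diff ?_ hz
    intro w hw
    rw [mem_closedBall, dist_eq_norm, hd10, sub_zero]
    exact le_trans (hd1bd w hw) (by linarith)
  intro z hz
  rcases eq_or_ne z 0 with rfl | hz0
  · simp [h0]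
  · have e1 : h z = z * d1 z := by
      have := sub_smul_dslope h 0 z
      rw [sub_zero, h0', sub_zero, smul_eq_mul] at this
      exact this.symm
    have e2 : d1 z = z * dslope d1 0 z := by
      have := sub_smul_dslope d1 0 z
      rw [sub_zero, hd10, sub_zero, smul_eq_mul] at this
      exact this.symm
    have e3 : ‖h z‖ = ‖z‖ ^ 2 * ‖dslope d1 0 z‖ := by
      rw [e1, e2, norm_mul, norm_mul]; ring
    calc ‖h z‖ = ‖z‖ ^ 2 * ‖dslope d1 0 z‖ := e3
    _ ≤ ‖z‖ ^ 2 * ((B / R + 1) / R) := by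
        gcongr
        exact hd2bd z hz
    _ = (B / R + 1) / R * ‖z‖ ^ 2 := by ring

lemma fiter_shift {d : ℕ} (α : Torus d) (f : Torus d → ℂ → ℂ) (n : ℕ) (θ : Torus d) (z : ℂ) :
    fiter α f n (θ + α) (f θ z) = fiter α f (n + 1) θ z := by
  induction n with
  | zero => show f θ z = f (θ + 0 • α) z; rw [zero_nsmul, add_zero]
  | succ n ih =>
      show f (θ + α + n • α) (fiter α f n (θ + α) (f θ z))
          = f (θ + (n + 1) • α) (fiter α f (n + 1) θ z)
      rw [ih]
      congr 1
      rw [succ_nsmul]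
      abel

lemma fiter_continuous {d : ℕ} (α : Torus d) {f : Torus d → ℂ → ℂ}
    (hcont : Continuous fun p : Torus d × ℂ => f p.1 p.2) (n : ℕ) :
    Continuous fun p : Torus d × ℂ => fiter α f n p.1 p.2 := by
  induction n with
  | zero => exact continuous_snd
  | succ n ih =>
      show Continuous fun p : Torus d × ℂ => f (p.1 + n • α) (fiter α f n p.1 p.2)
      exact hcont.comp ((continuous_fst.add continuous_const).prodMk ih)

lemma fiter_zero {d : ℕ} (α : Torus d) {f : Torus d → ℂ → ℂ}
    (hfix : ∀ θ : Torus d, f θ 0 = 0) (n : ℕ) (θ : Torus d) :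
    fiter α f n θ 0 = 0 := by
  induction n with
  | zero => rfl
  | succ n ih => show f (θ + n • α) (fiter α f n θ 0) = 0; rw [ih, hfix]

/-- Elementary algebraic identity used for the telescoping estimate. -/
lemma diff_identity (P ρn w w' : ℂ) (hP : P ≠ 0) (hρ : ρn ≠ 0) :
    (P * ρn)⁻¹ * w' - P⁻¹ * w = P⁻¹ * ρn⁻¹ * (w' - ρn * w) := by
  field_simp

end KoenigsAux

set_option maxHeartbeats 1000000 in
/-- **Fibered Koenigs linearization of an attracting invariant curve.**
With `ρ₁(θ) = ∂_z f_θ(0)` satisfying `|ρ₁| < c₀ < 1`, the normalized iterates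
`gⁿ_θ(z) = (∏_{i<n} ρ₁(θ+iα))⁻¹ f_θⁿ(z)` converge uniformly on a tube to a fiberwise
holomorphic `g` with `g_θ(0) = 0`, `∂_z g_θ(0) = 1` and `g_{θ+α}(f_θ(z)) = ρ₁(θ) g_θ(z)`,
so `F` is conjugate near the zero section to `Λ(θ,z) = (θ+α, ρ₁(θ)z)`. -/
theorem fibered_koenigs_linearization {d : ℕ} (α : Torus d) (hα : RatIndep α)
    (R c₀ : ℝ) (hR : 0 < R) (hc₀ : c₀ < 1)
    (f : Torus d → ℂ → ℂ)
    (hcont : Continuous (fun p : Torus d × ℂ => f p.1 p.2))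
    (hhol : ∀ θ : Torus d, DifferentiableOn ℂ (f θ) (ball (0:ℂ) R))
    (hinj : ∀ θ : Torus d, Set.InjOn (f θ) (ball (0:ℂ) R))
    (hfix : ∀ θ : Torus d, f θ 0 = 0)
    (hder0 : ∀ θ : Torus d, deriv (f θ) 0 ≠ 0)
    (hder : ∀ θ : Torus d, ‖deriv (f θ) 0‖ < c₀) :
    ∃ r : ℝ, 0 < r ∧ r ≤ R ∧ ∃ g : Torus d → ℂ → ℂ,
      ContinuousOn (fun p : Torus d × ℂ => g p.1 p.2)
        (Set.univ ×ˢ ball (0:ℂ) r) ∧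
      (∀ θ : Torus d, DifferentiableOn ℂ (g θ) (ball (0:ℂ) r)) ∧
      (∀ θ : Torus d, g θ 0 = 0) ∧
      (∀ θ : Torus d, deriv (g θ) 0 = 1) ∧
      TendstoUniformlyOn
        (fun n (p : Torus d × ℂ) =>
          (∏ i ∈ Finset.range n, deriv (f (p.1 + i • α)) 0)⁻¹ * fiter α f n p.1 p.2)
        (fun p => g p.1 p.2) atTop (Set.univ ×ˢ ball (0:ℂ) r) ∧
      ∀ θ : Torus d, ∀ z ∈ ball (0:ℂ) r,
        g (θ + α) (f θ z) = deriv (f θ) 0 * g θ z := by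
  classical
  -- basic positivity facts
  have θ₀ : Torus d := fun _ => 0
  have hc₀pos : 0 < c₀ := lt_of_le_of_lt (norm_nonneg _) (hder θ₀)
  set r₀ : ℝ := R / 2 with hr₀def
  have hr₀pos : 0 < r₀ := by positivity
  have hr₀R : r₀ < R := by rw [hr₀def]; linarith
  -- uniform bound for f on a compact tube
  obtain ⟨K, hK⟩ : ∃ K : ℝ, ∀ θ : Torus d, ∀ z ∈ closedBall (0:ℂ) r₀, ‖f θ z‖ ≤ K := by
    have hcpt : IsCompact ((univ : Set (Torus d)) ×ˢ closedBall (0:ℂ) r₀) :=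
      isCompact_univ.prod (isCompact_closedBall _ _)
    obtain ⟨p, -, hp⟩ := hcpt.exists_isMaxOn
      ⟨(θ₀, 0), by simp [hr₀pos.le]⟩ (hcont.norm.continuousOn)
    rw [isMaxOn_iff] at hp
    exact ⟨‖f p.1 p.2‖, fun θ z hz => hp (θ, z) ⟨mem_univ _, hz⟩⟩
  have hKpos : 0 ≤ K :=
    le_trans (norm_nonneg _) (hK θ₀ 0 (by simp [hr₀pos.le]))
  set B : ℝ := K + c₀ * r₀ + 1 with hBdef
  have hBpos : 0 < B := by positivity
  set C : ℝ := (B / r₀ + 1) / r₀ with hCdef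
  have hCpos : 0 < C := by positivity
  -- quadratic bound uniform in θ
  have hquad : ∀ θ : Torus d, ∀ z ∈ ball (0:ℂ) r₀,
      ‖f θ z - deriv (f θ) 0 * z‖ ≤ C * ‖z‖ ^ 2 := by
    intro θ z hz
    have := KoenigsAux.quad_bound hr₀pos
      ((hhol θ).mono (ball_subset_ball hr₀R.le)) (hfix θ) (B := B) ?_ z hz
    · linarith [this]
    · intro w hw
      have hw' : ‖w‖ < r₀ := by simpa [mem_ball_zero_iff] using hw
      have h1 : ‖f θ w - deriv (f θ) 0 * w‖ ≤ ‖f θ w‖ + ‖deriv (f θ) 0‖ * ‖w‖ := by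
        calc ‖f θ w - deriv (f θ) 0 * w‖ ≤ ‖f θ w‖ + ‖deriv (f θ) 0 * w‖ := norm_sub_le _ _
        _ = ‖f θ w‖ + ‖deriv (f θ) 0‖ * ‖w‖ := by rw [norm_mul]
      have h2 : ‖f θ w‖ ≤ K := hK θ w (ball_subset_closedBall hw)
      have h3 : ‖deriv (f θ) 0‖ * ‖w‖ ≤ c₀ * r₀ := by
        apply mul_le_mul (hder θ).le hw'.le (norm_nonneg _) hc₀pos.le
      rw [hBdef]; linarith
  -- continuity of the multiplier
  have hρcont : Continuous fun θ : Torus d => deriv (f θ) 0 := by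
    set t : ℕ → ℝ := fun k => r₀ / (2 * (k + 1)) with htdef
    have htpos : ∀ k : ℕ, 0 < t k := by intro k; rw [htdef]; positivity
    have htlt : ∀ k : ℕ, t k < r₀ := by
      intro k
      rw [htdef, div_lt_iff₀ (by positivity)]
      nlinarith [hr₀pos, (Nat.cast_nonneg k : (0:ℝ) ≤ (k:ℝ))]
    have hTU' : TendstoUniformly
        (fun (k : ℕ) (θ : Torus d) => f θ ((t k : ℝ) : ℂ) / ((t k : ℝ) : ℂ))
        (fun θ => deriv (f θ) 0) atTop := by
      rw [Metric.tendstoUniformly_iff]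
      intro ε hε
      have hlim : Tendsto (fun k : ℕ => C * t k) atTop (𝓝 0) := by
        have h1 : Tendsto (fun k : ℕ => 1 / ((k:ℝ) + 1)) atTop (𝓝 0) :=
          tendsto_one_div_add_atTop_nhds_zero_nat
        have h2 := h1.const_mul (C * r₀ / 2)
        have heq : (fun k : ℕ => C * t k) = fun k : ℕ => C * r₀ / 2 * (1 / ((k:ℝ) + 1)) := by
          funext k
          rw [htdef]
          field_simp
        rw [heq]
        simpa using h2
      filter_upwards [hlim.eventually (gt_mem_nhds hε)] with k hk θ
      have hnz : ‖((t k : ℝ) : ℂ)‖ = t k := by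
        rw [Complex.norm_real, Real.norm_eq_abs, abs_of_pos (htpos k)]
      have hzmem : ((t k : ℝ) : ℂ) ∈ ball (0:ℂ) r₀ := by
        rw [mem_ball_zero_iff, hnz]; exact htlt k
      have hne : ((t k : ℝ) : ℂ) ≠ 0 := by
        intro h
        exact absurd (by rw [h]; simp : ‖((t k : ℝ) : ℂ)‖ = 0)
          (by rw [hnz]; exact (htpos k).ne')
      have hq := hquad θ _ hzmem
      rw [hnz] at hq
      rw [dist_eq_norm]
      have heq2 : deriv (f θ) 0 - f θ ((t k : ℝ) : ℂ) / ((t k : ℝ) : ℂ)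
          = -((f θ ((t k : ℝ) : ℂ) - deriv (f θ) 0 * ((t k : ℝ) : ℂ)) / ((t k : ℝ) : ℂ)) := by
        field_simp
        ring
      rw [heq2, norm_neg, norm_div, hnz]
      calc ‖f θ ((t k : ℝ) : ℂ) - deriv (f θ) 0 * ((t k : ℝ) : ℂ)‖ / t k
          ≤ C * t k ^ 2 / t k := by gcongr
      _ = C * t k := by field_simp [pow_two]
      _ < ε := hk
    apply hTU'.continuous
    refine Frequently.of_forall fun k => ?_
    exact (hcont.comp (continuous_id.prodMk continuous_const)).div_const _
  -- uniform lower bound for the multiplier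
  obtain ⟨δ, hδpos, hδle⟩ : ∃ δ : ℝ, 0 < δ ∧ ∀ θ : Torus d, δ ≤ ‖deriv (f θ) 0‖ := by
    obtain ⟨θm, -, hθm⟩ := isCompact_univ.exists_isMinOn ⟨θ₀, mem_univ _⟩
      (hρcont.norm.continuousOn)
    rw [isMinOn_iff] at hθm
    exact ⟨‖deriv (f θm) 0‖, norm_pos_iff.mpr (hder0 θm), fun θ => hθm θ (mem_univ θ)⟩
  -- choice of radius
  set c₁ : ℝ := (c₀ + 1) / 2 with hc₁def
  have hc₁pos : 0 < c₁ := by rw [hc₁def]; linarith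
  have hc₁lt : c₁ < 1 := by rw [hc₁def]; linarith
  have hc₀c₁ : c₀ < c₁ := by rw [hc₁def]; linarith
  set r : ℝ := min r₀ ((c₁ - c₀) / C) with hrdef
  have hrpos : 0 < r := lt_min hr₀pos (div_pos (by linarith) hCpos)
  have hrr₀ : r ≤ r₀ := min_le_left _ _
  have hrR : r ≤ R := hrr₀.trans hr₀R.le
  have hCr : C * r ≤ c₁ - c₀ := by
    have : r ≤ (c₁ - c₀) / C := min_le_right _ _
    calc C * r ≤ C * ((c₁ - c₀) / C) := by gcongr
    _ = c₁ - c₀ := by field_simp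
  -- contraction estimate
  have hmap : ∀ θ : Torus d, ∀ z : ℂ, ‖z‖ < r → ‖f θ z‖ ≤ c₁ * ‖z‖ := by
    intro θ z hz
    have hzr₀ : z ∈ ball (0:ℂ) r₀ := by
      rw [mem_ball_zero_iff]; exact lt_of_lt_of_le hz hrr₀
    have h1 : ‖f θ z‖ ≤ ‖f θ z - deriv (f θ) 0 * z‖ + ‖deriv (f θ) 0 * z‖ := by
      calc ‖f θ z‖ = ‖f θ z - deriv (f θ) 0 * z + deriv (f θ) 0 * z‖ := by
            rw [sub_add_cancel]
      _ ≤ _ := norm_add_le _ _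
    have h2 : ‖f θ z - deriv (f θ) 0 * z‖ ≤ C * ‖z‖ ^ 2 := hquad θ z hzr₀
    have h3 : C * ‖z‖ ^ 2 ≤ (c₁ - c₀) * ‖z‖ := by
      have : C * ‖z‖ ≤ c₁ - c₀ :=
        le_trans (mul_le_mul_of_nonneg_left hz.le hCpos.le) hCr
      calc C * ‖z‖ ^ 2 = (C * ‖z‖) * ‖z‖ := by ring
      _ ≤ (c₁ - c₀) * ‖z‖ := by gcongr
    have h4 : ‖deriv (f θ) 0 * z‖ ≤ c₀ * ‖z‖ := by
      rw [norm_mul]; gcongr; exact (hder θ).le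
    nlinarith [norm_nonneg z]
  -- iterate bound
  have hit : ∀ (n : ℕ) (θ : Torus d) (z : ℂ), ‖z‖ < r →
      ‖fiter α f n θ z‖ ≤ c₁ ^ n * ‖z‖ := by
    intro n
    induction n with
    | zero => intro θ z _; simp [fiter]
    | succ n ih =>
        intro θ z hz
        have hw := ih θ z hz
        have hwlt : ‖fiter α f n θ z‖ < r := by
          have : c₁ ^ n * ‖z‖ < r := by
            have h1 : c₁ ^ n ≤ 1 := pow_le_one₀ hc₁pos.le hc₁lt.le
            nlinarith [norm_nonneg z]
          exact lt_of_le_of_lt hw this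
        calc ‖fiter α f (n+1) θ z‖ = ‖f (θ + n • α) (fiter α f n θ z)‖ := rfl
        _ ≤ c₁ * ‖fiter α f n θ z‖ := hmap _ _ hwlt
        _ ≤ c₁ * (c₁ ^ n * ‖z‖) := by gcongr
        _ = c₁ ^ (n + 1) * ‖z‖ := by ring
  have hitlt : ∀ (n : ℕ) (θ : Torus d) (z : ℂ), ‖z‖ < r → ‖fiter α f n θ z‖ < r := by
    intro n θ z hz
    have h1 : c₁ ^ n ≤ 1 := pow_le_one₀ hc₁pos.le hc₁lt.le
    have := hit n θ z hz
    nlinarith [norm_nonneg z]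
  -- the normalized iterates
  set G : ℕ → Torus d × ℂ → ℂ := fun n p =>
    (∏ i ∈ Finset.range n, deriv (f (p.1 + i • α)) 0)⁻¹ * fiter α f n p.1 p.2 with hGdef
  -- product lower bounds
  have hP : ∀ (θ : Torus d) (n : ℕ),
      δ ^ n ≤ ‖∏ i ∈ Finset.range n, deriv (f (θ + i • α)) 0‖ := by
    intro θ n
    rw [norm_prod]
    calc δ ^ n = ∏ _i ∈ Finset.range n, δ := by
          rw [Finset.prod_const, Finset.card_range]
    _ ≤ _ := Finset.prod_le_prod (fun _ _ => hδpos.le) (fun i _ => hδle _)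
  have hPne : ∀ (θ : Torus d) (n : ℕ),
      (∏ i ∈ Finset.range n, deriv (f (θ + i • α)) 0) ≠ 0 := by
    intro θ n
    exact Finset.prod_ne_zero_iff.mpr fun i _ => hder0 _
  -- key difference estimate
  have hgdiff : ∀ (n : ℕ) (θ : Torus d) (z : ℂ), ‖z‖ < r →
      ‖G (n+1) (θ, z) - G n (θ, z)‖ ≤ C / δ * (c₁ ^ n * ‖z‖) * ‖G n (θ, z)‖ := by
    intro n θ z hz
    have hPn0 : (∏ i ∈ Finset.range n, deriv (f (θ + i • α)) 0) ≠ 0 := hPne θ n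
    have hρn0 : deriv (f (θ + n • α)) 0 ≠ 0 := hder0 _
    have key : G (n+1) (θ, z) - G n (θ, z)
        = (∏ i ∈ Finset.range n, deriv (f (θ + i • α)) 0)⁻¹ * (deriv (f (θ + n • α)) 0)⁻¹
          * (f (θ + n • α) (fiter α f n θ z)
              - deriv (f (θ + n • α)) 0 * fiter α f n θ z) := by
      show (∏ i ∈ Finset.range (n+1), deriv (f (θ + i • α)) 0)⁻¹ * fiter α f (n+1) θ z
          - (∏ i ∈ Finset.range n, deriv (f (θ + i • α)) 0)⁻¹ * fiter α f n θ z = _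
      rw [Finset.prod_range_succ]
      exact KoenigsAux.diff_identity _ _ _ _ hPn0 hρn0
    have hwr : ‖fiter α f n θ z‖ < r := hitlt n θ z hz
    have hwball : fiter α f n θ z ∈ ball (0:ℂ) r₀ := by
      rw [mem_ball_zero_iff]; exact lt_of_lt_of_le hwr hrr₀
    have hq : ‖f (θ + n • α) (fiter α f n θ z)
        - deriv (f (θ + n • α)) 0 * fiter α f n θ z‖ ≤ C * ‖fiter α f n θ z‖ ^ 2 :=
      hquad (θ + n • α) _ hwball
    have hGn : ‖G n (θ, z)‖
        = ‖∏ i ∈ Finset.range n, deriv (f (θ + i • α)) 0‖⁻¹ * ‖fiter α f n θ z‖ := by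
      show ‖(∏ i ∈ Finset.range n, deriv (f (θ + i • α)) 0)⁻¹ * fiter α f n θ z‖ = _
      rw [norm_mul, norm_inv]
    have hρninv : ‖deriv (f (θ + n • α)) 0‖⁻¹ ≤ δ⁻¹ :=
      inv_anti₀ hδpos (hδle _)
    have hw : ‖fiter α f n θ z‖ ≤ c₁ ^ n * ‖z‖ := hit n θ z hz
    rw [key, norm_mul, norm_mul, norm_inv, norm_inv, hGn]
    calc ‖∏ i ∈ Finset.range n, deriv (f (θ + i • α)) 0‖⁻¹
          * ‖deriv (f (θ + n • α)) 0‖⁻¹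
          * ‖f (θ + n • α) (fiter α f n θ z)
              - deriv (f (θ + n • α)) 0 * fiter α f n θ z‖
        ≤ ‖∏ i ∈ Finset.range n, deriv (f (θ + i • α)) 0‖⁻¹
          * δ⁻¹ * (C * ‖fiter α f n θ z‖ ^ 2) := by gcongr
    _ = C / δ * ‖fiter α f n θ z‖
          * (‖∏ i ∈ Finset.range n, deriv (f (θ + i • α)) 0‖⁻¹ * ‖fiter α f n θ z‖) := by
        rw [div_eq_mul_inv]; ring
    _ ≤ C / δ * (c₁ ^ n * ‖z‖)
          * (‖∏ i ∈ Finset.range n, deriv (f (θ + i • α)) 0‖⁻¹ * ‖fiter α f n θ z‖) := by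
        gcongr
  -- uniform bound on G
  set E : ℝ := Real.exp (C * r / δ * (1 / (1 - c₁))) with hEdef
  have hEpos : 0 < E := Real.exp_pos _
  have hstep : ∀ (n : ℕ) (θ : Torus d) (z : ℂ), ‖z‖ < r →
      ‖G (n+1) (θ, z)‖ ≤ (1 + C * r / δ * c₁ ^ n) * ‖G n (θ, z)‖ := by
    intro n θ z hz
    have h1 : ‖G (n+1) (θ, z)‖ ≤ ‖G n (θ, z)‖ + ‖G (n+1) (θ, z) - G n (θ, z)‖ := by
      calc ‖G (n+1) (θ, z)‖ = ‖G n (θ, z) + (G (n+1) (θ, z) - G n (θ, z))‖ := by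
            rw [add_sub_cancel]
      _ ≤ _ := norm_add_le _ _
    have h2 := hgdiff n θ z hz
    have h3 : C / δ * (c₁ ^ n * ‖z‖) * ‖G n (θ, z)‖
        ≤ C * r / δ * c₁ ^ n * ‖G n (θ, z)‖ := by
      apply mul_le_mul_of_nonneg_right _ (norm_nonneg _)
      calc C / δ * (c₁ ^ n * ‖z‖) ≤ C / δ * (c₁ ^ n * r) := by
            apply mul_le_mul_of_nonneg_left _ (by positivity)
            exact mul_le_mul_of_nonneg_left hz.le (pow_nonneg hc₁pos.le n)
      _ = C * r / δ * c₁ ^ n := by ring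
    nlinarith [norm_nonneg (G n (θ, z))]
  have hprodle : ∀ n : ℕ, (∏ k ∈ Finset.range n, (1 + C * r / δ * c₁ ^ k)) ≤ E := by
    intro n
    calc ∏ k ∈ Finset.range n, (1 + C * r / δ * c₁ ^ k)
        ≤ ∏ k ∈ Finset.range n, Real.exp (C * r / δ * c₁ ^ k) := by
          apply Finset.prod_le_prod (fun k _ => by positivity)
          intro k _
          have := Real.add_one_le_exp (C * r / δ * c₁ ^ k)
          linarith
    _ = Real.exp (∑ k ∈ Finset.range n, C * r / δ * c₁ ^ k) := (Real.exp_sum _ _).symm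
    _ ≤ E := by
        rw [hEdef, Real.exp_le_exp, ← Finset.mul_sum]
        exact mul_le_mul_of_nonneg_left
          (KoenigsAux.geom_sum_le_one_div hc₁pos.le hc₁lt n) (by positivity)
  have hGle : ∀ (n : ℕ) (θ : Torus d) (z : ℂ), ‖z‖ < r → ‖G n (θ, z)‖ ≤ E * ‖z‖ := by
    have hprod : ∀ (n : ℕ) (θ : Torus d) (z : ℂ), ‖z‖ < r →
        ‖G n (θ, z)‖ ≤ (∏ k ∈ Finset.range n, (1 + C * r / δ * c₁ ^ k)) * ‖z‖ := by
      intro n θ z hz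
      induction n with
      | zero => simp [hGdef, fiter]
      | succ n ih =>
          calc ‖G (n+1) (θ, z)‖ ≤ (1 + C * r / δ * c₁ ^ n) * ‖G n (θ, z)‖ := hstep n θ z hz
          _ ≤ (1 + C * r / δ * c₁ ^ n)
              * ((∏ k ∈ Finset.range n, (1 + C * r / δ * c₁ ^ k)) * ‖z‖) := by
              apply mul_le_mul_of_nonneg_left ih (by positivity)
          _ = (∏ k ∈ Finset.range (n+1), (1 + C * r / δ * c₁ ^ k)) * ‖z‖ := by
              rw [Finset.prod_range_succ]; ring
    intro n θ z hz
    calc ‖G n (θ, z)‖ ≤ (∏ k ∈ Finset.range n, (1 + C * r / δ * c₁ ^ k)) * ‖z‖ :=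
          hprod n θ z hz
    _ ≤ E * ‖z‖ := mul_le_mul_of_nonneg_right (hprodle n) (norm_nonneg _)
  -- geometric Cauchy estimate
  set A : ℝ := C / δ * r * (E * r) with hAdef
  have hApos : 0 < A := by positivity
  have hcau : ∀ (θ : Torus d) (z : ℂ), ‖z‖ < r → ∀ n : ℕ,
      dist (G n (θ, z)) (G (n+1) (θ, z)) ≤ A * c₁ ^ n := by
    intro θ z hz n
    rw [dist_eq_norm, norm_sub_rev]
    calc ‖G (n+1) (θ, z) - G n (θ, z)‖ ≤ C / δ * (c₁ ^ n * ‖z‖) * ‖G n (θ, z)‖ :=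
          hgdiff n θ z hz
    _ ≤ C / δ * (c₁ ^ n * r) * (E * r) := by
        have h1 : ‖G n (θ, z)‖ ≤ E * r :=
          le_trans (hGle n θ z hz) (mul_le_mul_of_nonneg_left hz.le hEpos.le)
        gcongr
    _ = A * c₁ ^ n := by rw [hAdef]; ring
  -- the limit function
  set g : Torus d → ℂ → ℂ := fun θ z => limUnder atTop (fun n => G n (θ, z)) with hgdef
  have hgt : ∀ (θ : Torus d) (z : ℂ), ‖z‖ < r →
      Tendsto (fun n => G n (θ, z)) atTop (𝓝 (g θ z)) := fun θ z hz =>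
    (cauchySeq_of_le_geometric c₁ A hc₁lt (hcau θ z hz)).tendsto_limUnder
  have hrate : ∀ (θ : Torus d) (z : ℂ), ‖z‖ < r → ∀ n : ℕ,
      dist (G n (θ, z)) (g θ z) ≤ A * c₁ ^ n / (1 - c₁) := fun θ z hz n =>
    dist_le_of_le_geometric_of_tendsto c₁ A hc₁lt (hcau θ z hz) (hgt θ z hz) n
  -- uniform convergence
  have hTU : TendstoUniformlyOn G (fun p => g p.1 p.2) atTop
      ((univ : Set (Torus d)) ×ˢ ball (0:ℂ) r) := by
    rw [Metric.tendstoUniformlyOn_iff]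
    intro ε hε
    have h0 : Tendsto (fun n : ℕ => A * c₁ ^ n / (1 - c₁)) atTop (𝓝 0) := by
      have := (tendsto_pow_atTop_nhds_zero_of_lt_one hc₁pos.le hc₁lt).const_mul A
      simpa using this.div_const (1 - c₁)
    filter_upwards [h0.eventually (gt_mem_nhds hε)] with n hn p hp
    have hz : ‖p.2‖ < r := by
      rw [← mem_ball_zero_iff]; exact hp.2
    calc dist (g p.1 p.2) (G n p) = dist (G n (p.1, p.2)) (g p.1 p.2) := by
          rw [dist_comm]
    _ ≤ A * c₁ ^ n / (1 - c₁) := hrate p.1 p.2 hz n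
    _ < ε := hn
  -- continuity of each G n
  have hGcont : ∀ n : ℕ, Continuous (G n) := by
    intro n
    apply Continuous.mul
    · apply Continuous.inv₀
      · exact continuous_finset_prod _ fun i _ =>
          hρcont.comp (continuous_fst.add continuous_const)
      · exact fun p => hPne p.1 n
    · exact KoenigsAux.fiter_continuous α hcont n
  -- fiberwise uniform convergence and differentiability
  have hfib : ∀ θ : Torus d, TendstoUniformlyOn (fun n z => G n (θ, z)) (g θ)
      atTop (ball (0:ℂ) r) := by
    intro θ
    have := hTU.comp (fun z : ℂ => ((θ, z) : Torus d × ℂ))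
    exact this.mono (fun z hz => ⟨mem_univ _, hz⟩)
  have hfiterdiff : ∀ (n : ℕ) (θ : Torus d),
      DifferentiableOn ℂ (fiter α f n θ) (ball (0:ℂ) r) := by
    intro n
    induction n with
    | zero => intro θ; exact differentiableOn_id
    | succ n ih =>
        intro θ
        have : DifferentiableOn ℂ (f (θ + n • α) ∘ fiter α f n θ) (ball (0:ℂ) r) := by
          apply DifferentiableOn.comp (hhol (θ + n • α)) (ih θ)
          intro z hz
          rw [mem_ball_zero_iff] at hz ⊢
          exact lt_of_lt_of_le (hitlt n θ z hz) (hrr₀.trans hr₀R.le)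
        exact this
  have hGdiffOn : ∀ (n : ℕ) (θ : Torus d),
      DifferentiableOn ℂ (fun z => G n (θ, z)) (ball (0:ℂ) r) := by
    intro n θ
    exact (hfiterdiff n θ).const_smul
      ((∏ i ∈ Finset.range n, deriv (f (θ + i • α)) 0)⁻¹ : ℂ)
  -- fixed point and normalization
  have hG0 : ∀ (n : ℕ) (θ : Torus d), G n (θ, 0) = 0 := by
    intro n θ
    rw [hGdef]
    simp [KoenigsAux.fiter_zero α hfix n θ]
  have hg0 : ∀ θ : Torus d, g θ 0 = 0 := by
    intro θ
    have h1 := hgt θ 0 (by simpa using hrpos)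
    have h2 : Tendsto (fun n => G n (θ, 0)) atTop (𝓝 0) := by
      simp only [hG0]; exact tendsto_const_nhds
    exact tendsto_nhds_unique h1 h2
  -- quadratic closeness of g to the identity
  set K₂ : ℝ := C / δ * E * (1 / (1 - c₁)) with hK₂def
  have hK₂pos : 0 < K₂ := by
    rw [hK₂def]
    have : (0:ℝ) < 1 - c₁ := by linarith
    positivity
  have hquadg : ∀ (θ : Torus d) (z : ℂ), ‖z‖ < r → ‖g θ z - z‖ ≤ K₂ * ‖z‖ ^ 2 := by
    intro θ z hz
    have hdq : ∀ n : ℕ, ‖G (n+1) (θ, z) - G n (θ, z)‖ ≤ C / δ * E * ‖z‖ ^ 2 * c₁ ^ n := by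
      intro n
      calc ‖G (n+1) (θ, z) - G n (θ, z)‖ ≤ C / δ * (c₁ ^ n * ‖z‖) * ‖G n (θ, z)‖ :=
            hgdiff n θ z hz
      _ ≤ C / δ * (c₁ ^ n * ‖z‖) * (E * ‖z‖) :=
            mul_le_mul_of_nonneg_left (hGle n θ z hz) (by positivity)
      _ = C / δ * E * ‖z‖ ^ 2 * c₁ ^ n := by ring
    have hGz : ∀ n : ℕ, ‖G n (θ, z) - z‖
        ≤ C / δ * E * ‖z‖ ^ 2 * ∑ k ∈ Finset.range n, c₁ ^ k := by
      intro n
      induction n with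
      | zero => simp [hGdef, fiter]
      | succ n ih =>
          have h1 : G (n+1) (θ, z) - z = (G (n+1) (θ, z) - G n (θ, z)) + (G n (θ, z) - z) := by
            ring
          calc ‖G (n+1) (θ, z) - z‖
              ≤ ‖G (n+1) (θ, z) - G n (θ, z)‖ + ‖G n (θ, z) - z‖ := by
                rw [h1]; exact norm_add_le _ _
          _ ≤ C / δ * E * ‖z‖ ^ 2 * ∑ k ∈ Finset.range (n+1), c₁ ^ k := by
              rw [Finset.sum_range_succ, mul_add]
              have := hdq n
              linarith [ih]
    have hlim : Tendsto (fun n => ‖G n (θ, z) - z‖) atTop (𝓝 ‖g θ z - z‖) :=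
      ((hgt θ z hz).sub_const z).norm
    apply le_of_tendsto hlim
    filter_upwards with n
    calc ‖G n (θ, z) - z‖ ≤ C / δ * E * ‖z‖ ^ 2 * ∑ k ∈ Finset.range n, c₁ ^ k := hGz n
    _ ≤ C / δ * E * ‖z‖ ^ 2 * (1 / (1 - c₁)) :=
        mul_le_mul_of_nonneg_left
          (KoenigsAux.geom_sum_le_one_div hc₁pos.le hc₁lt n) (by positivity)
    _ = K₂ * ‖z‖ ^ 2 := by rw [hK₂def]; ring
  have hderiv1 : ∀ θ : Torus d, deriv (g θ) 0 = 1 := by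
    intro θ
    have hlo : (fun z : ℂ => g θ z - z) =o[𝓝 0] fun z : ℂ => z := by
      have hbig : (fun z : ℂ => g θ z - z) =O[𝓝 0] fun z : ℂ => ‖z‖ ^ 2 := by
        rw [Asymptotics.isBigO_iff]
        refine ⟨K₂, ?_⟩
        filter_upwards [Metric.ball_mem_nhds (0:ℂ) hrpos] with z hz
        have : ‖z‖ < r := by rwa [mem_ball_zero_iff] at hz
        simpa using hquadg θ z this
      exact hbig.trans_isLittleO (Asymptotics.isLittleO_norm_pow_id one_lt_two)
    have hd : HasDerivAt (g θ) 1 0 := by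
      rw [hasDerivAt_iff_isLittleO]
      simpa [hg0 θ] using hlo
    exact hd.deriv
  -- conjugacy
  have hconj : ∀ θ : Torus d, ∀ z ∈ ball (0:ℂ) r,
      g (θ + α) (f θ z) = deriv (f θ) 0 * g θ z := by
    intro θ z hzball
    have hz : ‖z‖ < r := mem_ball_zero_iff.mp hzball
    have hfz : ‖f θ z‖ < r := by
      have h1 := hmap θ z hz
      nlinarith [norm_nonneg z]
    have hρ0 : deriv (f θ) 0 ≠ 0 := hder0 θ
    have hkey : ∀ n : ℕ, G n (θ + α, f θ z) = deriv (f θ) 0 * G (n+1) (θ, z) := by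
      intro n
      show (∏ i ∈ Finset.range n, deriv (f (θ + α + i • α)) 0)⁻¹
            * fiter α f n (θ + α) (f θ z)
          = deriv (f θ) 0 * ((∏ i ∈ Finset.range (n+1), deriv (f (θ + i • α)) 0)⁻¹
            * fiter α f (n+1) θ z)
      rw [KoenigsAux.fiter_shift α f n θ z]
      have e2 : (∏ i ∈ Finset.range n, deriv (f (θ + α + i • α)) 0)
          = ∏ i ∈ Finset.range n, deriv (f (θ + (i+1) • α)) 0 := by
        apply Finset.prod_congr rfl
        intro i _
        congr 2
        rw [succ_nsmul]
        abel
      have e3 : (∏ i ∈ Finset.range (n+1), deriv (f (θ + i • α)) 0)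
          = (∏ i ∈ Finset.range n, deriv (f (θ + (i+1) • α)) 0) * deriv (f θ) 0 := by
        rw [Finset.prod_range_succ', zero_nsmul, add_zero]
      have hQ0 : (∏ i ∈ Finset.range n, deriv (f (θ + (i+1) • α)) 0) ≠ 0 :=
        Finset.prod_ne_zero_iff.mpr fun i _ => hder0 _
      rw [e2, e3, mul_inv]
      field_simp
    have h1 : Tendsto (fun n => G n (θ + α, f θ z)) atTop (𝓝 (g (θ + α) (f θ z))) :=
      hgt _ _ hfz
    have h2 : Tendsto (fun n => deriv (f θ) 0 * G (n+1) (θ, z)) atTop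
        (𝓝 (deriv (f θ) 0 * g θ z)) :=
      ((hgt θ z hz).comp (tendsto_add_atTop_nat 1)).const_mul _
    exact tendsto_nhds_unique h1 (h2.congr fun n => (hkey n).symm)
  -- assemble
  exact ⟨r, hrpos, hrR, g,
    hTU.continuousOn (Frequently.of_forall fun n => (hGcont n).continuousOn),
    fun θ => ((hfib θ).tendstoLocallyUniformlyOn).differentiableOn
      (Eventually.of_forall fun n => hGdiffOn n θ) isOpen_ball,
    hg0, hderiv1, hTU, hconj⟩
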